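/- With Δ_𝔭 the positive self-adjoint operator on 𝔭 = P𝔥 with graph {(PQp, PQ^⊥p) : p ∈ 𝔭} (P, Q in generic position), the map W: 𝔮 → 𝔭 defined by Wq := (1 + Δ_𝔭)^{1/2} Pq is a surjective isometry from 𝔮 onto 𝔭. -/

import Mathlib

open scoped ComplexInnerProductSpace

/-- Composition of two operators given by their graphs (first apply `G`, then `H`). -/
def GraphComp {E : Type*} (G H : Set (E × E)) : Set (E × E) :=
  {z : E × E | ∃ w : E, (z.1, w) ∈ G ∧ (w, z.2) ∈ H}

/-- `G` is the graph of a positive self-adjoint operator on the subspace `𝔰`. -/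
def IsPosSelfAdjGraph {E : Type*} [NormedAddCommGroup E] [InnerProductSpace ℂ E]
    (𝔰 : Submodule ℂ E) (G : Set (E × E)) : Prop :=
  (∀ z ∈ G, 0 ≤ (⟪z.1, z.2⟫ : ℂ).re ∧ (⟪z.1, z.2⟫ : ℂ).im = 0) ∧
  G = {z : E × E | z.1 ∈ 𝔰 ∧ z.2 ∈ 𝔰 ∧ ∀ w ∈ G, ⟪w.2, z.1⟫ = ⟪w.1, z.2⟫}

/-- Lemma 4.17: the map `W : 𝔮 → 𝔭`, `Wq = (1 + Δ_𝔭)^{1/2} P q`, is a surjective isometry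
from `𝔮` onto `𝔭`. Here `Δ_𝔭` has graph `{(PQp, PQ⊥p) : p ∈ 𝔭}` and `(1 + Δ_𝔭)^{1/2}` is
its positive self-adjoint square root, given by the graph `graB`. -/
theorem W_isometry
    {E : Type*} [NormedAddCommGroup E] [InnerProductSpace ℂ E] [CompleteSpace E]
    (P : E →L[ℂ] E) (hP_proj : P ∘L P = P) (hP_sa : IsSelfAdjoint P)
    (Q : E →L[ℂ] E) (hQ_proj : Q ∘L Q = Q) (hQ_sa : IsSelfAdjoint Q)
    (hgen1 : LinearMap.range (P : E →ₗ[ℂ] E) ⊓ LinearMap.range (Q : E →ₗ[ℂ] E) = ⊥)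
    (hgen2 : LinearMap.range (P : E →ₗ[ℂ] E) ⊓ (LinearMap.range (Q : E →ₗ[ℂ] E))ᗮ = ⊥)
    (hgen3 : (LinearMap.range (P : E →ₗ[ℂ] E))ᗮ ⊓ LinearMap.range (Q : E →ₗ[ℂ] E) = ⊥)
    (hgen4 : (LinearMap.range (P : E →ₗ[ℂ] E))ᗮ ⊓ (LinearMap.range (Q : E →ₗ[ℂ] E))ᗮ = ⊥)
    (graΔ graB : Set (E × E))
    (hΔ : graΔ = {z : E × E | ∃ p ∈ LinearMap.range (P : E →ₗ[ℂ] E), z = (P (Q p), P ((1 - Q) p))})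
    -- `graB` is the graph of `(1 + Δ_𝔭)^{1/2}`
    (hB_pos : IsPosSelfAdjGraph (LinearMap.range (P : E →ₗ[ℂ] E)) graB)
    (hB_sq : GraphComp graB graB = {z : E × E | ∃ w ∈ graΔ, z = (w.1, w.1 + w.2)}) :
    -- `W` is everywhere defined on 𝔮 …
    (∀ q ∈ LinearMap.range (Q : E →ₗ[ℂ] E), ∃ y : E, (P q, y) ∈ graB) ∧
    -- … isometric …
    (∀ q ∈ LinearMap.range (Q : E →ₗ[ℂ] E), ∀ y : E, (P q, y) ∈ graB → ‖y‖ = ‖q‖) ∧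
    -- … and onto 𝔭
    (∀ p ∈ LinearMap.range (P : E →ₗ[ℂ] E), ∃ q ∈ LinearMap.range (Q : E →ₗ[ℂ] E), (P q, p) ∈ graB) := by
  classical
  obtain ⟨hBpos, hBeq⟩ := hB_pos
  -- basic projection facts
  have hPP : ∀ x : E, P (P x) = P x := fun x => by
    simpa using DFunLike.congr_fun hP_proj x
  have hQQ : ∀ x : E, Q (Q x) = Q x := fun x => by
    simpa using DFunLike.congr_fun hQ_proj x
  have hPmem : ∀ x : E, x ∈ LinearMap.range (P : E →ₗ[ℂ] E) ↔ P x = x := by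
    intro x
    constructor
    · rintro ⟨y, rfl⟩; exact hPP y
    · intro h; exact ⟨x, h⟩
  have hQmem : ∀ x : E, x ∈ LinearMap.range (Q : E →ₗ[ℂ] E) ↔ Q x = x := by
    intro x
    constructor
    · rintro ⟨y, rfl⟩; exact hQQ y
    · intro h; exact ⟨x, h⟩
  have hPsym : ∀ x y : E, (⟪P x, y⟫ : ℂ) = ⟪x, P y⟫ := fun x y =>
    ContinuousLinearMap.isSelfAdjoint_iff_isSymmetric.mp hP_sa x y
  have hQsym : ∀ x y : E, (⟪Q x, y⟫ : ℂ) = ⟪x, Q y⟫ := fun x y =>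
    ContinuousLinearMap.isSelfAdjoint_iff_isSymmetric.mp hQ_sa x y
  -- membership facts for graB
  have hBmem1 : ∀ z ∈ graB, z.1 ∈ LinearMap.range (P : E →ₗ[ℂ] E) := by
    intro z hz; rw [hBeq] at hz; exact hz.1
  have hBmem2 : ∀ z ∈ graB, z.2 ∈ LinearMap.range (P : E →ₗ[ℂ] E) := by
    intro z hz; rw [hBeq] at hz; exact hz.2.1
  have hrule : ∀ z ∈ graB, ∀ w ∈ graB, (⟪w.2, z.1⟫ : ℂ) = ⟪w.1, z.2⟫ := by
    intro z hz; rw [hBeq] at hz; exact hz.2.2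
  have hBintro : ∀ z : E × E, z.1 ∈ LinearMap.range (P : E →ₗ[ℂ] E) → z.2 ∈ LinearMap.range (P : E →ₗ[ℂ] E) →
      (∀ w ∈ graB, (⟪w.2, z.1⟫ : ℂ) = ⟪w.1, z.2⟫) → z ∈ graB := by
    intro z h1 h2 h3
    rw [hBeq]
    exact ⟨h1, h2, h3⟩
  -- graB is closed under linear operations
  have hBzero : (((0 : E), (0 : E)) : E × E) ∈ graB :=
    hBintro (0, 0) (Submodule.zero_mem _) (Submodule.zero_mem _) (fun w hw => by simp)
  have hBsub : ∀ z ∈ graB, ∀ u ∈ graB, ((z.1 - u.1, z.2 - u.2) : E × E) ∈ graB := by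
    intro z hz u hu
    refine hBintro _ (Submodule.sub_mem _ (hBmem1 z hz) (hBmem1 u hu))
      (Submodule.sub_mem _ (hBmem2 z hz) (hBmem2 u hu)) ?_
    intro w hw
    simp only [inner_sub_right]
    rw [hrule z hz w hw, hrule u hu w hw]
  have hBadd : ∀ z ∈ graB, ∀ u ∈ graB, ((z.1 + u.1, z.2 + u.2) : E × E) ∈ graB := by
    intro z hz u hu
    refine hBintro _ (Submodule.add_mem _ (hBmem1 z hz) (hBmem1 u hu))
      (Submodule.add_mem _ (hBmem2 z hz) (hBmem2 u hu)) ?_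
    intro w hw
    simp only [inner_add_right]
    rw [hrule z hz w hw, hrule u hu w hw]
  have hBsmul : ∀ (c : ℂ), ∀ z ∈ graB, ((c • z.1, c • z.2) : E × E) ∈ graB := by
    intro c z hz
    refine hBintro _ (Submodule.smul_mem _ c (hBmem1 z hz))
      (Submodule.smul_mem _ c (hBmem2 z hz)) ?_
    intro w hw
    simp only [inner_smul_right]
    rw [hrule z hz w hw]
  -- the key consequence of hB_sq
  have hdag : ∀ p : E, P p = p → ∃ w, ((P (Q p), w) : E × E) ∈ graB ∧ ((w, p) : E × E) ∈ graB := by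
    intro p hp
    have h1 : ((P (Q p), P ((1 - Q) p)) : E × E) ∈ graΔ := by
      rw [hΔ]; exact ⟨p, ⟨p, hp⟩, rfl⟩
    have h2 : ((P (Q p), p) : E × E) ∈ GraphComp graB graB := by
      rw [hB_sq]
      refine ⟨(P (Q p), P ((1 - Q) p)), h1, ?_⟩
      have h3 : P ((1 - Q) p) = p - P (Q p) := by
        have h4 : (1 - Q) p = p - Q p := by
          simp [ContinuousLinearMap.sub_apply]
        rw [h4, map_sub, hp]
      simp [h3, hp]
    obtain ⟨w, hw1, hw2⟩ := h2
    exact ⟨w, hw1, hw2⟩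
  have hex : ∀ p : E, ∃ w, P p = p →
      (((P (Q p), w) : E × E) ∈ graB ∧ ((w, p) : E × E) ∈ graB) := by
    intro p
    by_cases hp : P p = p
    · obtain ⟨w, hw⟩ := hdag p hp; exact ⟨w, fun _ => hw⟩
    · exact ⟨0, fun h => absurd h hp⟩
  choose wmap hwmap using hex
  -- kernel facts from generic position
  have hker2 : ∀ v : E, v ∈ LinearMap.range (P : E →ₗ[ℂ] E) → Q v = 0 → v = 0 := by
    intro v hv hQv
    have hvo : v ∈ (LinearMap.range (Q : E →ₗ[ℂ] E))ᗮ := by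
      refine (Submodule.mem_orthogonal _ _).mpr ?_
      rintro u ⟨x, rfl⟩
      rw [ContinuousLinearMap.coe_coe, hQsym, hQv, inner_zero_right]
    have hb : v ∈ (⊥ : Submodule ℂ E) := by
      rw [← hgen2]; exact Submodule.mem_inf.mpr ⟨hv, hvo⟩
    simpa using hb
  -- inner product helpers
  have hQself : ∀ a b : E, (⟪Q a, b⟫ : ℂ) = ⟪Q a, Q b⟫ := by
    intro a b
    conv_lhs => rw [← hQQ a]
    exact hQsym (Q a) b
  have hTQ : ∀ b : E, P b = b → (⟪P (Q b), b⟫ : ℂ) = ⟪Q b, Q b⟫ := by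
    intro b hb
    rw [hPsym, hb]
    exact hQself b b
  -- B is injective and single-valued
  have h0r : ∀ v : E, (((0 : E), v) : E × E) ∈ graB → v = 0 := by
    intro v hv
    have hv2 : v ∈ LinearMap.range (P : E →ₗ[ℂ] E) := hBmem2 _ hv
    have hPv : P v = v := (hPmem v).mp hv2
    obtain ⟨hw1, _⟩ := hwmap v hPv
    have h1 : (⟪wmap v, (0 : E)⟫ : ℂ) = ⟪P (Q v), v⟫ := hrule (0, v) hv (P (Q v), wmap v) hw1
    have h2 : (⟪Q v, Q v⟫ : ℂ) = 0 := by
      rw [← hTQ v hPv, ← h1, inner_zero_right]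
    exact hker2 v hv2 (inner_self_eq_zero.mp h2)
  have h0l : ∀ u : E, ((u, (0 : E)) : E × E) ∈ graB → u = 0 := by
    intro u hu
    have hu1 : u ∈ LinearMap.range (P : E →ₗ[ℂ] E) := hBmem1 _ hu
    have hPu : P u = u := (hPmem u).mp hu1
    obtain ⟨_, hw2⟩ := hwmap u hPu
    have h1 : (⟪(0 : E), wmap u⟫ : ℂ) = ⟪u, u⟫ := hrule (wmap u, u) hw2 (u, 0) hu
    have h2 : (⟪u, u⟫ : ℂ) = 0 := by rw [← h1, inner_zero_left]
    exact inner_self_eq_zero.mp h2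
  have hfun : ∀ a v v' : E, ((a, v) : E × E) ∈ graB → ((a, v') : E × E) ∈ graB → v = v' := by
    intro a v v' h h'
    have hs := hBsub (a, v) h (a, v') h'
    rw [sub_self] at hs
    exact sub_eq_zero.mp (h0r _ hs)
  have hinj : ∀ a a' v : E, ((a, v) : E × E) ∈ graB → ((a', v) : E × E) ∈ graB → a = a' := by
    intro a a' v h h'
    have hs := hBsub (a, v) h (a', v) h'
    rw [sub_self] at hs
    exact sub_eq_zero.mp (h0l _ hs)
  -- norm identity: for (a,b) ∈ B, ‖a‖ = ‖Q b‖
  have L1 : ∀ a b : E, ((a, b) : E × E) ∈ graB → (⟪a, a⟫ : ℂ) = ⟪Q b, Q b⟫ := by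
    intro a b hab
    have hb : P b = b := (hPmem b).mp (hBmem2 _ hab)
    obtain ⟨hw1, hw2⟩ := hwmap b hb
    have ha : a = wmap b := hinj a (wmap b) b hab hw2
    have h1 : (⟪wmap b, wmap b⟫ : ℂ) = ⟪P (Q b), b⟫ :=
      hrule (wmap b, b) hw2 (P (Q b), wmap b) hw1
    rw [ha, h1]
    exact hTQ b hb
  have hnorm : ∀ a b : E, ((a, b) : E × E) ∈ graB → ‖a‖ = ‖Q b‖ := by
    intro a b hab
    have h := L1 a b hab
    rw [inner_self_eq_norm_sq_to_K, inner_self_eq_norm_sq_to_K] at h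
    have h2 : (‖a‖ : ℝ) ^ 2 = ‖Q b‖ ^ 2 := by exact_mod_cast h
    nlinarith [norm_nonneg a, norm_nonneg (Q b)]
  -- density: Q(𝔭) is dense in 𝔮
  have hQrange_closed : IsClosed ((LinearMap.range (Q : E →ₗ[ℂ] E) : Submodule ℂ E) : Set E) := by
    have hset : ((LinearMap.range (Q : E →ₗ[ℂ] E) : Submodule ℂ E) : Set E) = {x : E | Q x = x} := by
      ext x; simpa using hQmem x
    rw [hset]
    exact isClosed_eq Q.continuous continuous_id
  have hdense : ∀ q : E, Q q = q → ∃ f : ℕ → E,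
      (∀ n, P (f n) = f n) ∧ Filter.Tendsto (fun n => Q (f n)) Filter.atTop (nhds q) := by
    intro q hq
    set S : Submodule ℂ E := (LinearMap.range (P : E →ₗ[ℂ] E)).map (Q : E →ₗ[ℂ] E) with hS
    have hq_closure : q ∈ closure (S : Set E) := by
      set C := S.topologicalClosure with hC
      haveI : CompleteSpace C := S.isClosed_topologicalClosure.isComplete.completeSpace_coe
      obtain ⟨s, hs, z, hz, hqsz⟩ := C.exists_add_mem_mem_orthogonal q
      have hSC : S ≤ C := Submodule.le_topologicalClosure S
      have hzS : ∀ u ∈ S, (⟪u, z⟫ : ℂ) = 0 := fun u hu =>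
        (Submodule.mem_orthogonal C z).mp hz u (hSC hu)
      have hCQ : C ≤ LinearMap.range (Q : E →ₗ[ℂ] E) := by
        apply Submodule.topologicalClosure_minimal
        · rintro u ⟨p, hp, rfl⟩
          exact ⟨p, rfl⟩
        · exact hQrange_closed
      have hQs : Q s = s := (hQmem s).mp (hCQ hs)
      have hQz : Q z = z := by
        have hzv : z = q - s := by rw [hqsz]; abel
        rw [hzv, map_sub, hq, hQs]
      have hzP : ∀ u : E, P u = u → (⟪u, z⟫ : ℂ) = 0 := by
        intro u hu
        have h1 : (⟪Q u, z⟫ : ℂ) = 0 := hzS (Q u) ⟨u, ⟨u, hu⟩, rfl⟩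
        rw [hQsym, hQz] at h1
        exact h1
      have hzmem : z ∈ (LinearMap.range (P : E →ₗ[ℂ] E))ᗮ := (Submodule.mem_orthogonal _ _).mpr
        (fun u hu => hzP u ((hPmem u).mp hu))
      have hz0 : z = 0 := by
        have hb : z ∈ (⊥ : Submodule ℂ E) := by
          rw [← hgen3]
          exact Submodule.mem_inf.mpr ⟨hzmem, (hQmem z).mpr hQz⟩
        simpa using hb
      have hqC : q ∈ C := by rw [hqsz, hz0, add_zero]; exact hs
      rw [← Submodule.topologicalClosure_coe]
      exact hqC
    obtain ⟨g, hg_mem, hg_tendsto⟩ := mem_closure_iff_seq_limit.mp hq_closure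
    have hchoice : ∀ n, ∃ p : E, P p = p ∧ Q p = g n := by
      intro n
      obtain ⟨p, hp, hpg⟩ := hg_mem n
      exact ⟨p, (hPmem p).mp hp, hpg⟩
    choose f hf1 hf2 using hchoice
    refine ⟨f, hf1, ?_⟩
    have hfg : (fun n => Q (f n)) = g := funext hf2
    rw [hfg]
    exact hg_tendsto
  -- MAIN CONSTRUCTION: for q ∈ 𝔮 there is y with (Pq, y) ∈ B and ⟪y,y⟫ = ⟪q,q⟫
  have partA : ∀ q : E, Q q = q → ∃ y, ((P q, y) : E × E) ∈ graB ∧ (⟪y, y⟫ : ℂ) = ⟪q, q⟫ := by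
    intro q hq
    obtain ⟨f, hf, hQf⟩ := hdense q hq
    have hwspec : ∀ n, ((P (Q (f n)), wmap (f n)) : E × E) ∈ graB ∧
        ((wmap (f n), f n) : E × E) ∈ graB := fun n => hwmap (f n) (hf n)
    have hsub : ∀ m n : ℕ, ((wmap (f m) - wmap (f n), f m - f n) : E × E) ∈ graB :=
      fun m n => hBsub _ (hwspec m).2 _ (hwspec n).2
    have hdist : ∀ m n : ℕ, dist (wmap (f m)) (wmap (f n)) = dist (Q (f m)) (Q (f n)) := by
      intro m n
      rw [dist_eq_norm, dist_eq_norm]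
      have h := hnorm _ _ (hsub m n)
      rwa [map_sub] at h
    have hcauchyQ : CauchySeq (fun n => Q (f n)) := hQf.cauchySeq
    have hcauchy : CauchySeq (fun n => wmap (f n)) := by
      rw [Metric.cauchySeq_iff] at hcauchyQ ⊢
      intro ε hε
      obtain ⟨N, hN⟩ := hcauchyQ ε hε
      exact ⟨N, fun m hm n hn => by rw [hdist]; exact hN m hm n hn⟩
    obtain ⟨y, hy⟩ := cauchySeq_tendsto_of_complete hcauchy
    have hPwn : ∀ n, P (wmap (f n)) = wmap (f n) := fun n =>
      (hPmem _).mp (hBmem1 _ (hwspec n).2)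
    have hPy : P y = y := by
      have h1 : Filter.Tendsto (fun n => P (wmap (f n))) Filter.atTop (nhds (P y)) :=
        (P.continuous.tendsto y).comp hy
      have h2 : (fun n => P (wmap (f n))) = fun n => wmap (f n) := funext hPwn
      rw [h2] at h1
      exact tendsto_nhds_unique h1 hy
    have hmemB : ((P q, y) : E × E) ∈ graB := by
      refine hBintro (P q, y) ⟨q, rfl⟩ ((hPmem y).mpr hPy) ?_
      intro u hu
      have hu2 : P u.2 = u.2 := (hPmem _).mp (hBmem2 u hu)
      have hn : ∀ n, (⟪u.1, wmap (f n)⟫ : ℂ) = ⟪u.2, Q (f n)⟫ := by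
        intro n
        have h1 : (⟪u.2, P (Q (f n))⟫ : ℂ) = ⟪u.1, wmap (f n)⟫ :=
          hrule (P (Q (f n)), wmap (f n)) (hwspec n).1 u hu
        rw [← h1, ← hPsym, hu2]
      have hL : Filter.Tendsto (fun n => (⟪u.1, wmap (f n)⟫ : ℂ)) Filter.atTop
          (nhds ⟪u.1, y⟫) := Filter.Tendsto.inner tendsto_const_nhds hy
      have hR : Filter.Tendsto (fun n => (⟪u.2, Q (f n)⟫ : ℂ)) Filter.atTop
          (nhds ⟪u.2, q⟫) := Filter.Tendsto.inner tendsto_const_nhds hQf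
      have heq : (⟪u.1, y⟫ : ℂ) = ⟪u.2, q⟫ := by
        rw [funext hn] at hL
        exact tendsto_nhds_unique hL hR
      rw [← hPsym, hu2, heq]
    refine ⟨y, hmemB, ?_⟩
    have hww : ∀ n, (⟪wmap (f n), wmap (f n)⟫ : ℂ) = ⟪Q (f n), Q (f n)⟫ :=
      fun n => L1 _ _ (hwspec n).2
    have hwy : ∀ n, (⟪wmap (f n), y⟫ : ℂ) = ⟪Q (f n), q⟫ := by
      intro n
      have h1 : (⟪f n, P q⟫ : ℂ) = ⟪wmap (f n), y⟫ :=
        hrule (P q, y) hmemB (wmap (f n), f n) (hwspec n).2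
      have h2 : (⟪f n, P q⟫ : ℂ) = ⟪f n, q⟫ := by rw [← hPsym, hf n]
      have h3 : (⟪Q (f n), q⟫ : ℂ) = ⟪f n, q⟫ := by rw [hQsym, hq]
      rw [← h1, h2, h3]
    have hyw : ∀ n, (⟪y, wmap (f n)⟫ : ℂ) = ⟪q, Q (f n)⟫ := by
      intro n
      have h := congrArg (starRingEnd ℂ) (hwy n)
      simpa [inner_conj_symm] using h
    have hid : ∀ n, (⟪wmap (f n) - y, wmap (f n) - y⟫ : ℂ)
        - ⟪Q (f n) - q, Q (f n) - q⟫ = ⟪y, y⟫ - ⟪q, q⟫ := by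
      intro n
      simp only [inner_sub_left, inner_sub_right]
      rw [hww n, hwy n, hyw n]
      ring
    have hL : Filter.Tendsto (fun n => (⟪wmap (f n) - y, wmap (f n) - y⟫ : ℂ)
        - ⟪Q (f n) - q, Q (f n) - q⟫) Filter.atTop (nhds 0) := by
      have t1 : Filter.Tendsto (fun n => wmap (f n) - y) Filter.atTop (nhds 0) := by
        simpa using hy.sub (tendsto_const_nhds (x := y))
      have t2 : Filter.Tendsto (fun n => Q (f n) - q) Filter.atTop (nhds 0) := by
        simpa using hQf.sub (tendsto_const_nhds (x := q))
      have t3 := (Filter.Tendsto.inner (𝕜 := ℂ) t1 t1).sub (Filter.Tendsto.inner (𝕜 := ℂ) t2 t2)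
      simpa using t3
    have hz : (⟪y, y⟫ : ℂ) - ⟪q, q⟫ = 0 := by
      have hconst : Filter.Tendsto (fun n => (⟪wmap (f n) - y, wmap (f n) - y⟫ : ℂ)
          - ⟪Q (f n) - q, Q (f n) - q⟫) Filter.atTop (nhds ((⟪y, y⟫ : ℂ) - ⟪q, q⟫)) := by
        rw [funext hid]
        exact tendsto_const_nhds
      exact tendsto_nhds_unique hconst hL
    exact sub_eq_zero.mp hz
  -- isometry
  have part2 : ∀ q : E, Q q = q → ∀ y : E, ((P q, y) : E × E) ∈ graB → ‖y‖ = ‖q‖ := by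
    intro q hq y hy
    obtain ⟨y0, hy0, hiso⟩ := partA q hq
    have hyy0 : y = y0 := hfun _ _ _ hy hy0
    rw [hyy0]
    rw [inner_self_eq_norm_sq_to_K, inner_self_eq_norm_sq_to_K] at hiso
    have h2 : (‖y0‖ : ℝ) ^ 2 = ‖q‖ ^ 2 := by exact_mod_cast hiso
    nlinarith [norm_nonneg y0, norm_nonneg q]
  -- the range of W as a submodule
  let M : Submodule ℂ E :=
    { carrier := {y : E | ∃ q : E, Q q = q ∧ ((P q, y) : E × E) ∈ graB}
      add_mem' := by
        rintro a b ⟨qa, hqa, hba⟩ ⟨qb, hqb, hbb⟩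
        refine ⟨qa + qb, by rw [map_add, hqa, hqb], ?_⟩
        have h := hBadd (P qa, a) hba (P qb, b) hbb
        simpa [map_add] using h
      zero_mem' := ⟨0, by simp, by simpa using hBzero⟩
      smul_mem' := by
        rintro c a ⟨qa, hqa, hba⟩
        refine ⟨c • qa, by rw [map_smul, hqa], ?_⟩
        have h := hBsmul c (P qa, a) hba
        simpa [map_smul] using h }
  have hMP : ∀ y ∈ M, P y = y := by
    rintro y ⟨q, hq, hB⟩
    exact (hPmem y).mp (hBmem2 _ hB)
  have hMclosed : IsClosed (M : Set E) := by
    apply IsSeqClosed.isClosed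
    intro ys y hys hyy
    choose qs hqs hBs using hys
    have hCy : CauchySeq ys := hyy.cauchySeq
    have hdst : ∀ m n : ℕ, dist (qs m) (qs n) = dist (ys m) (ys n) := by
      intro m n
      rw [dist_eq_norm, dist_eq_norm]
      have hsub : ((P (qs m) - P (qs n), ys m - ys n) : E × E) ∈ graB :=
        hBsub _ (hBs m) _ (hBs n)
      have hsub' : ((P (qs m - qs n), ys m - ys n) : E × E) ∈ graB := by
        rwa [map_sub]
      have hq' : Q (qs m - qs n) = qs m - qs n := by rw [map_sub, hqs m, hqs n]
      exact (part2 _ hq' _ hsub').symm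
    have hCq : CauchySeq qs := by
      rw [Metric.cauchySeq_iff] at hCy ⊢
      intro ε hε
      obtain ⟨N, hN⟩ := hCy ε hε
      exact ⟨N, fun m hm n hn => by rw [hdst]; exact hN m hm n hn⟩
    obtain ⟨q, hq⟩ := cauchySeq_tendsto_of_complete hCq
    have hQq : Q q = q := by
      have h1 : Filter.Tendsto (fun n => Q (qs n)) Filter.atTop (nhds (Q q)) :=
        (Q.continuous.tendsto q).comp hq
      have h2 : (fun n => Q (qs n)) = qs := funext hqs
      rw [h2] at h1
      exact tendsto_nhds_unique h1 hq
    refine ⟨q, hQq, ?_⟩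
    refine hBintro (P q, y) ⟨q, rfl⟩ ?_ ?_
    · apply (hPmem y).mpr
      have h1 : Filter.Tendsto (fun n => P (ys n)) Filter.atTop (nhds (P y)) :=
        (P.continuous.tendsto y).comp hyy
      have h2 : (fun n => P (ys n)) = ys :=
        funext fun n => (hPmem _).mp (hBmem2 _ (hBs n))
      rw [h2] at h1
      exact tendsto_nhds_unique h1 hyy
    · intro u hu
      have hn : ∀ n, (⟪u.2, P (qs n)⟫ : ℂ) = ⟪u.1, ys n⟫ := fun n =>
        hrule _ (hBs n) u hu
      have hL : Filter.Tendsto (fun n => (⟪u.2, P (qs n)⟫ : ℂ)) Filter.atTop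
          (nhds ⟪u.2, P q⟫) :=
        Filter.Tendsto.inner tendsto_const_nhds ((P.continuous.tendsto q).comp hq)
      have hR : Filter.Tendsto (fun n => (⟪u.1, ys n⟫ : ℂ)) Filter.atTop
          (nhds ⟪u.1, y⟫) := Filter.Tendsto.inner tendsto_const_nhds hyy
      rw [funext hn] at hL
      exact tendsto_nhds_unique hL hR
  haveI : CompleteSpace M := hMclosed.completeSpace_coe
  -- surjectivity
  have part3 : ∀ p : E, P p = p → ∃ q : E, Q q = q ∧ ((P q, p) : E × E) ∈ graB := by
    intro p hp
    obtain ⟨m, hm, z, hz, hpmz⟩ := M.exists_add_mem_mem_orthogonal p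
    have hPz : P z = z := by
      have hzv : z = p - m := by rw [hpmz]; abel
      rw [hzv, map_sub, hp, hMP m hm]
    have hzorth : ∀ u ∈ M, (⟪u, z⟫ : ℂ) = 0 := (Submodule.mem_orthogonal M z).mp hz
    obtain ⟨hwz1, hwz2⟩ := hwmap z hPz
    have hPw0 : P (wmap z) = wmap z := (hPmem _).mp (hBmem1 _ hwz2)
    obtain ⟨hww1, hww2⟩ := hwmap (wmap z) hPw0
    have hmemM : wmap (wmap z) ∈ M := ⟨Q (wmap z), hQQ (wmap z), hww1⟩
    have h1 : (⟪z, wmap (wmap z)⟫ : ℂ) = ⟪wmap z, wmap z⟫ :=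
      hrule (wmap (wmap z), wmap z) hww2 (wmap z, z) hwz2
    have h2 : (⟪z, wmap (wmap z)⟫ : ℂ) = 0 := by
      have h3 := hzorth (wmap (wmap z)) hmemM
      have h4 := congrArg (starRingEnd ℂ) h3
      simpa [inner_conj_symm] using h4
    have hw00 : wmap z = 0 := by
      have h5 : (⟪wmap z, wmap z⟫ : ℂ) = 0 := by rw [← h1, h2]
      exact inner_self_eq_zero.mp h5
    have hz0 : z = 0 := h0r z (by rwa [hw00] at hwz2)
    have hpM : p ∈ M := by rw [hpmz, hz0, add_zero]; exact hm
    obtain ⟨q, hq, hB⟩ := hpM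
    exact ⟨q, hq, hB⟩
  -- assemble
  refine ⟨?_, ?_, ?_⟩
  · intro q hq
    obtain ⟨y, hy, _⟩ := partA q ((hQmem q).mp hq)
    exact ⟨y, hy⟩
  · intro q hq y hy
    exact part2 q ((hQmem q).mp hq) y hy
  · intro p hpmem
    obtain ⟨q, hq, hB⟩ := part3 p ((hPmem p).mp hpmem)
    exact ⟨q, (hQmem q).mpr hq, hB⟩
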